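/- Let n ≥ 0 be an integer. For a ∈ ℂ and k ∈ ℕ let binom(a, k) = a(a−1)⋯(a−k+1)/k! denote the generalized binomial coefficient. Define F(w) = Σ_{j=0}^{n} (−1)^{n−j} binom((2n+1)/2, n−j) · w^{2j+1}, define Ψ(z) = z · (1 + z^{−2})^{1/2} using the principal branch of the complex power, and for each integer k ≥ 0 define c_k = Σ_{j=0}^{n} (−1)^{n−j} binom((2n+1)/2, n−j) · binom((2j+1)/2, k+j+1). Then for every z ∈ ℂ with |z| > 1, the series Σ_{k=0}^{∞} c_k · z^{−(2k+1)} converges unconditionally (HasSum) with sum F(Ψ(z)) − z^{2n+1}. -/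

import Mathlib

open Finset Filter

/-- The generalized binomial coefficient `binom(a, k) = a(a-1)⋯(a-k+1)/k!`. -/
noncomputable def genBinom (a : ℂ) (k : ℕ) : ℂ :=
  (∏ i ∈ Finset.range k, (a - i)) / (k.factorial : ℂ)

lemma genBinom_zero (a : ℂ) : genBinom a 0 = 1 := by simp [genBinom]

lemma genBinom_succ (a : ℂ) (k : ℕ) :
    genBinom a (k + 1) = genBinom a k * (a - k) / (k + 1) := by
  have h1 : ((k.factorial : ℂ)) ≠ 0 := Nat.cast_ne_zero.2 k.factorial_ne_zero
  have h2 : ((k : ℂ) + 1) ≠ 0 := Nat.cast_add_one_ne_zero k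
  simp only [genBinom, Finset.prod_range_succ, Nat.factorial_succ]
  push_cast
  rw [div_mul_eq_mul_div, div_div, mul_comm ((k:ℂ)+1)]

lemma genBinom_pascal (a : ℂ) (k : ℕ) :
    genBinom (a + 1) (k + 1) = genBinom a (k + 1) + genBinom a k := by
  have h1 : ((k.factorial : ℂ)) ≠ 0 := Nat.cast_ne_zero.2 k.factorial_ne_zero
  have h2 : ((k : ℂ) + 1) ≠ 0 := Nat.cast_add_one_ne_zero k
  have hp : ∏ i ∈ range (k+1), (a + 1 - i) = (∏ i ∈ range k, (a - i)) * (a + 1) := by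
    rw [Finset.prod_range_succ']
    congr 1
    · exact Finset.prod_congr rfl (fun i _ => by push_cast; ring)
    · simp
  simp only [genBinom, hp, Finset.prod_range_succ, Nat.factorial_succ]
  push_cast
  field_simp
  ring

lemma genBinom_natCast (m k : ℕ) : genBinom (m : ℂ) k = (m.choose k : ℂ) := by
  induction m generalizing k with
  | zero =>
    cases k with
    | zero => simp [genBinom]
    | succ k =>
      simp [genBinom, Finset.prod_range_succ']
  | succ m ih =>
    cases k with
    | zero => simp [genBinom]
    | succ k =>
      have h := genBinom_pascal (m : ℂ) k
      push_cast
      rw [h, ih (k+1), ih k, Nat.choose_succ_succ]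
      push_cast
      ring

lemma vandermonde_nat (m : ℕ) : ∀ (k : ℕ) (a : ℂ),
    ∑ i ∈ range (k+1), genBinom a i * (m.choose (k-i) : ℂ) = genBinom (a + m) k := by
  induction m with
  | zero =>
    intro k a
    rw [Finset.sum_eq_single_of_mem k (Finset.self_mem_range_succ k)]
    · simp
    · intro i hi hne
      have : k - i ≠ 0 := by
        have : i < k := lt_of_le_of_ne (Nat.lt_succ_iff.1 (Finset.mem_range.1 hi)) hne
        omega
      simp [Nat.choose_eq_zero_of_lt (by omega : (0:ℕ) < k - i), this]
  | succ m ih =>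
    intro k a
    cases k with
    | zero => simp [genBinom_zero]
    | succ k =>
      have step : ∑ i ∈ range (k+2), genBinom a i * ((m+1).choose (k+1-i) : ℂ)
          = (∑ i ∈ range (k+2), genBinom a i * (m.choose (k+1-i) : ℂ))
            + ∑ i ∈ range (k+1), genBinom a i * (m.choose (k-i) : ℂ) := by
        rw [Finset.sum_range_succ, Finset.sum_range_succ (fun i => genBinom a i * (m.choose (k+1-i) : ℂ))]
        have h0 : ((m+1).choose (k+1-(k+1)) : ℂ) = (m.choose (k+1-(k+1)) : ℂ) := by simp
        rw [h0]
        have hmain : ∑ x ∈ range (k+1), genBinom a x * ((m+1).choose (k+1-x) : ℂ)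
            = ∑ x ∈ range (k+1), (genBinom a x * (m.choose (k+1-x) : ℂ) + genBinom a x * (m.choose (k-x) : ℂ)) := by
          apply Finset.sum_congr rfl
          intro i hi
          have hik : i ≤ k := Nat.lt_succ_iff.1 (Finset.mem_range.1 hi)
          have h1 : k + 1 - i = (k - i) + 1 := by omega
          rw [h1, Nat.choose_succ_succ, Nat.cast_add]
          simp only [Nat.succ_eq_add_one]
          ring
        rw [hmain, Finset.sum_add_distrib]
        ring
      rw [step, ih (k+1) a, ih k a]
      have : a + ((m : ℂ) + 1) = (a + m) + 1 := by ring
      push_cast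
      rw [this, genBinom_pascal]

lemma genBinom_eval (x : ℂ) (k : ℕ) :
    genBinom x k = Polynomial.eval x
      (Polynomial.C ((k.factorial : ℂ))⁻¹ * ∏ t ∈ range k, (Polynomial.X - Polynomial.C (t:ℂ))) := by
  simp [genBinom, Polynomial.eval_prod, div_eq_inv_mul, mul_comm]

lemma genBinom_vandermonde (a b : ℂ) (k : ℕ) :
    ∑ i ∈ range (k+1), genBinom a i * genBinom b (k-i) = genBinom (a + b) k := by
  set P : Polynomial ℂ := ∑ i ∈ range (k+1), Polynomial.C (genBinom a i) *
      (Polynomial.C (((k-i).factorial : ℂ))⁻¹ * ∏ t ∈ range (k-i), (Polynomial.X - Polynomial.C (t:ℂ))) with hP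
  set Q : Polynomial ℂ := (Polynomial.C ((k.factorial : ℂ))⁻¹ *
      ∏ t ∈ range k, (Polynomial.X - Polynomial.C (t:ℂ))).comp (Polynomial.C a + Polynomial.X) with hQ
  have hPe : ∀ x : ℂ, P.eval x = ∑ i ∈ range (k+1), genBinom a i * genBinom x (k-i) := by
    intro x
    rw [hP, Polynomial.eval_finset_sum]
    exact Finset.sum_congr rfl fun i _ => by rw [Polynomial.eval_mul, Polynomial.eval_C, ← genBinom_eval]
  have hQe : ∀ x : ℂ, Q.eval x = genBinom (a + x) k := by
    intro x
    rw [hQ, Polynomial.eval_comp]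
    simp only [Polynomial.eval_add, Polynomial.eval_C, Polynomial.eval_X]
    exact (genBinom_eval (a + x) k).symm
  have hPQ : P = Q := by
    apply Polynomial.eq_of_infinite_eval_eq
    apply Set.Infinite.mono (s := Set.range (Nat.cast : ℕ → ℂ))
    · rintro x ⟨m, rfl⟩
      simp only [Set.mem_setOf_eq, hPe, hQe]
      have := vandermonde_nat m k a
      rw [← this]
      exact Finset.sum_congr rfl fun i _ => by rw [genBinom_natCast]
    · exact Set.infinite_range_of_injective Nat.cast_injective
  have := congrArg (Polynomial.eval b) hPQ
  rwa [hPe, hQe] at this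

lemma genBinom_mul (a : ℂ) (s t : ℕ) :
    genBinom a s * genBinom (a - s) t = genBinom a (s+t) * ((s+t).choose s : ℂ) := by
  have key : (∏ i ∈ range s, (a - i)) * ∏ i ∈ range t, (a - s - i) = ∏ i ∈ range (s+t), (a - i) := by
    rw [Finset.prod_range_add]
    congr 1
    exact Finset.prod_congr rfl fun i _ => by push_cast; ring
  have hc : ((s+t).choose s : ℂ) * (s.factorial : ℂ) * (t.factorial : ℂ) = ((s+t).factorial : ℂ) := by
    have := Nat.choose_mul_factorial_mul_factorial (Nat.le_add_right s t)
    have h2 : s + t - s = t := by omega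
    rw [h2] at this
    exact_mod_cast congrArg (Nat.cast : ℕ → ℂ) this
  have h1 : ((s.factorial : ℂ)) ≠ 0 := Nat.cast_ne_zero.2 s.factorial_ne_zero
  have h2 : ((t.factorial : ℂ)) ≠ 0 := Nat.cast_ne_zero.2 t.factorial_ne_zero
  have h3 : (((s+t).factorial : ℂ)) ≠ 0 := Nat.cast_ne_zero.2 (s+t).factorial_ne_zero
  unfold genBinom
  rw [div_mul_div_comm, key]
  rw [div_mul_eq_mul_div, div_eq_div_iff (mul_ne_zero h1 h2) h3, ← hc]
  ring

lemma alt_sum_choose (r : ℕ) :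
    ∑ s ∈ range (r+1), (-1 : ℂ)^s * (r.choose s : ℂ) = if r = 0 then 1 else 0 := by
  have := Int.alternating_sum_range_choose (n := r)
  have := congrArg (Int.cast : ℤ → ℂ) this
  push_cast at this
  simpa using this

lemma summable_genBinom_aux (a : ℂ) {x : ℝ} (hx0 : 0 ≤ x) (hx : x < 1) :
    Summable (fun k : ℕ => ‖genBinom a k‖ * x ^ k) := by
  apply summable_of_ratio_norm_eventually_le (r := (1+x)/2) (by linarith)
  have htend : Tendsto (fun k : ℕ => (k : ℝ) * (1 - x) / 2) atTop atTop := by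
    apply Tendsto.atTop_div_const (by norm_num)
    exact Tendsto.atTop_mul_const (by linarith) tendsto_natCast_atTop_atTop
  filter_upwards [htend.eventually_ge_atTop ‖a‖] with k hk
  have hak : ‖a - (k : ℂ)‖ ≤ ‖a‖ + k := by
    calc ‖a - (k : ℂ)‖ ≤ ‖a‖ + ‖(k : ℂ)‖ := norm_sub_le _ _
    _ = ‖a‖ + k := by simp
  have hkey : ‖a - (k : ℂ)‖ * x ≤ (k + 1) * ((1 + x)/2) := by
    have h1 : ‖a - (k : ℂ)‖ * x ≤ (‖a‖ + k) * x :=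
      mul_le_mul_of_nonneg_right hak hx0
    have h2 : (‖a‖ + k) * x ≤ (k + 1) * ((1 + x)/2) := by nlinarith [norm_nonneg a]
    linarith
  have hgb : ‖genBinom a (k+1)‖ = ‖genBinom a k‖ * ‖a - (k:ℂ)‖ / (k+1) := by
    rw [genBinom_succ]
    rw [norm_div, norm_mul]
    congr 1
    push_cast
    have h5 : ((k:ℂ)+1) = (((k:ℝ)+1 : ℝ) : ℂ) := by push_cast; ring
    rw [h5, Complex.norm_real, Real.norm_eq_abs, abs_of_nonneg (by positivity)]
  have hk1 : (0:ℝ) < k + 1 := by positivity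
  rw [Real.norm_eq_abs, Real.norm_eq_abs, abs_of_nonneg (by positivity), abs_of_nonneg (by positivity), hgb]
  rw [pow_succ, div_mul_eq_mul_div, div_le_iff₀ hk1]
  have hb : (0:ℝ) ≤ ‖genBinom a k‖ * x ^ k := by positivity
  calc ‖genBinom a k‖ * ‖a - (k:ℂ)‖ * (x ^ k * x)
      = (‖genBinom a k‖ * x ^ k) * (‖a - (k:ℂ)‖ * x) := by ring
    _ ≤ (‖genBinom a k‖ * x ^ k) * ((k + 1) * ((1 + x)/2)) := by
        exact mul_le_mul_of_nonneg_left hkey hb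
    _ = (1 + x) / 2 * (‖genBinom a k‖ * x ^ k) * (k + 1) := by ring

lemma summable_norm_genBinom (a : ℂ) {u : ℂ} (hu : ‖u‖ < 1) :
    Summable (fun k : ℕ => ‖genBinom a k * u ^ k‖) := by
  have := summable_genBinom_aux a (norm_nonneg u) hu
  simpa [norm_mul, norm_pow] using this

lemma summable_genBinom (a : ℂ) {u : ℂ} (hu : ‖u‖ < 1) :
    Summable (fun k : ℕ => genBinom a k * u ^ k) :=
  (summable_norm_genBinom a hu).of_norm

/-- the sum function -/
noncomputable def gsum (a : ℂ) (u : ℂ) : ℂ := ∑' k : ℕ, genBinom a k * u ^ k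

lemma hasSum_gsum (a : ℂ) {u : ℂ} (hu : ‖u‖ < 1) :
    HasSum (fun k : ℕ => genBinom a k * u ^ k) (gsum a u) :=
  (summable_genBinom a hu).hasSum

noncomputable def gbSeries (a : ℂ) : FormalMultilinearSeries ℂ ℂ ℂ :=
  fun k => genBinom a k • ContinuousMultilinearMap.mkPiAlgebraFin ℂ k ℂ

lemma gbSeries_apply (a u : ℂ) (k : ℕ) :
    (gbSeries a k) (fun _ => u) = genBinom a k * u ^ k := by
  simp [gbSeries, ContinuousMultilinearMap.mkPiAlgebraFin_apply, List.prod_ofFn]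

lemma gbSeries_norm (a : ℂ) (k : ℕ) : ‖gbSeries a k‖ = ‖genBinom a k‖ := by
  have : ‖genBinom a k • ContinuousMultilinearMap.mkPiAlgebraFin ℂ k ℂ‖
      = ‖genBinom a k‖ * ‖ContinuousMultilinearMap.mkPiAlgebraFin ℂ k ℂ‖ :=
    norm_smul (genBinom a k) (ContinuousMultilinearMap.mkPiAlgebraFin ℂ k ℂ)
  rw [gbSeries, this, ContinuousMultilinearMap.norm_mkPiAlgebraFin, mul_one]

lemma one_le_radius (a : ℂ) : 1 ≤ (gbSeries a).radius := by
  apply ENNReal.le_of_forall_nnreal_lt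
  intro r hr
  apply FormalMultilinearSeries.le_radius_of_summable
  have hr1 : (r : ℝ) < 1 := by exact_mod_cast hr
  have := summable_genBinom_aux a r.coe_nonneg hr1
  apply this.congr
  intro k
  rw [gbSeries_norm]

lemma continuousOn_gsum (a : ℂ) :
    ContinuousOn (gsum a) (Metric.ball (0:ℂ) 1) := by
  have hrad : (0:ENNReal) < (gbSeries a).radius := lt_of_lt_of_le one_pos (one_le_radius a)
  have h := (gbSeries a).hasFPowerSeriesOnBall hrad
  have hc := h.continuousOn
  apply ContinuousOn.congr (hc.mono ?_)
  · intro u hu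
    rw [FormalMultilinearSeries.sum]
    unfold gsum
    congr 1
    ext k
    rw [gbSeries_apply]
  · intro u hu
    simp only [Metric.mem_ball, dist_zero_right] at hu
    simp only [EMetric.mem_ball, edist_zero_right]
    calc ‖u‖₊ < (1 : ENNReal) := by exact_mod_cast hu
      _ ≤ (gbSeries a).radius := one_le_radius a


lemma one_add_ne_zero {u : ℂ} (hu : ‖u‖ < 1) : (1 : ℂ) + u ≠ 0 := by
  intro h
  have : u = -1 := by linear_combination h
  rw [this] at hu
  simp at hu

lemma cpow_half_sq {u : ℂ} (hu : ‖u‖ < 1) :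
    ((1 + u) ^ ((1:ℂ)/2)) ^ 2 = 1 + u := by
  have h := one_add_ne_zero hu
  rw [sq, ← Complex.cpow_add _ _ h]
  norm_num

lemma cpow_half_ne_zero {u : ℂ} (hu : ‖u‖ < 1) : (1 + u) ^ ((1:ℂ)/2) ≠ 0 := by
  intro h
  have := cpow_half_sq hu
  rw [h] at this
  exact one_add_ne_zero hu (by simpa using this.symm)

lemma gsum_sq {u : ℂ} (hu : ‖u‖ < 1) : gsum (1/2) u * gsum (1/2) u = 1 + u := by
  unfold gsum
  rw [tsum_mul_tsum_eq_tsum_sum_range_of_summable_norm (summable_norm_genBinom _ hu)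
    (summable_norm_genBinom _ hu)]
  have h1 : ∀ n : ℕ, ∑ i ∈ range (n+1), genBinom (1/2) i * u ^ i * (genBinom (1/2) (n-i) * u ^ (n-i))
      = genBinom 1 n * u ^ n := by
    intro n
    have : ∀ i ∈ range (n+1), genBinom (1/2) i * u ^ i * (genBinom (1/2) (n-i) * u ^ (n-i))
        = genBinom (1/2) i * genBinom (1/2) (n-i) * u ^ n := by
      intro i hi
      have hin : i ≤ n := Nat.lt_succ_iff.1 (mem_range.1 hi)
      have : u ^ i * u ^ (n - i) = u ^ n := by
        rw [← pow_add]
        congr 1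
        omega
      rw [← this]
      ring
    rw [Finset.sum_congr rfl this, ← Finset.sum_mul, genBinom_vandermonde]
    norm_num
  rw [tsum_congr h1]
  have h2 : ∀ n ∉ range 2, genBinom 1 n * u ^ n = 0 := by
    intro n hn
    have hn2 : 2 ≤ n := by simpa [Nat.lt_iff_add_one_le] using hn
    have : genBinom ((1:ℕ) : ℂ) n = ((Nat.choose 1 n : ℕ) : ℂ) := genBinom_natCast 1 n
    have hc : Nat.choose 1 n = 0 := Nat.choose_eq_zero_of_lt (by omega)
    simp only [Nat.cast_one] at this
    rw [this, hc]
    simp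
  rw [tsum_eq_sum h2]
  have g0 : genBinom 1 0 = 1 := genBinom_zero 1
  have g1 : genBinom 1 1 = 1 := by
    have := genBinom_natCast 1 1
    simpa using this
  rw [Finset.sum_range_succ, Finset.sum_range_one, g0, g1]
  ring

lemma gsum_half_eq_cpow {u : ℂ} (hu : ‖u‖ < 1) :
    gsum (1/2) u = (1 + u) ^ ((1:ℂ)/2) := by
  -- clopen argument on the ball
  set B : Set ℂ := Metric.ball (0:ℂ) 1 with hB
  have hBu : u ∈ B := by simpa [hB, Metric.mem_ball, dist_zero_right] using hu
  have hnorm : ∀ v ∈ B, ‖v‖ < 1 := by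
    intro v hv; simpa [hB, Metric.mem_ball, dist_zero_right] using hv
  have hccpow : ContinuousOn (fun v : ℂ => (1 + v) ^ ((1:ℂ)/2)) B := by
    apply ContinuousOn.cpow
    · exact (continuous_const.add continuous_id).continuousOn
    · exact continuousOn_const
    · intro v hv
      have h1 : (0:ℝ) < 1 - ‖v‖ := by linarith [hnorm v hv]
      have : 0 < (1 + v).re := by
        have := Complex.abs_re_le_norm v
        simp only [Complex.add_re, Complex.one_re]
        have : |v.re| ≤ ‖v‖ := by simpa using Complex.abs_re_le_norm v
        have hre : -‖v‖ ≤ v.re := by cases abs_le.1 this; assumption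
        linarith [hnorm v hv]
      exact Or.inl this
  have hφcont : ContinuousOn (fun v : ℂ => gsum (1/2) v / (1 + v) ^ ((1:ℂ)/2)) B := by
    apply ContinuousOn.div (continuousOn_gsum _) hccpow
    intro v hv
    exact cpow_half_ne_zero (hnorm v hv)
  set φ : ℂ → ℂ := fun v => gsum (1/2) v / (1 + v) ^ ((1:ℂ)/2) with hφ
  have hφval : ∀ v ∈ B, φ v = 1 ∨ φ v = -1 := by
    intro v hv
    have h2 : φ v * φ v = 1 := by
      rw [hφ]
      simp only
      rw [div_mul_div_comm, gsum_sq (hnorm v hv)]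
      rw [← sq, cpow_half_sq (hnorm v hv), div_self (one_add_ne_zero (hnorm v hv))]
    exact mul_self_eq_one_iff.1 h2
  -- restrict to subtype
  have hBconv : Convex ℝ B := convex_ball 0 1
  have hBpre : IsPreconnected B := hBconv.isPreconnected
  haveI : PreconnectedSpace B := Subtype.preconnectedSpace hBpre
  set ψ : B → ℂ := fun x => φ x with hψ
  have hψcont : Continuous ψ := continuousOn_iff_continuous_restrict.1 hφcont
  set T : Set B := ψ ⁻¹' {1} with hT
  have hTopen : IsOpen T := by
    have : T = ψ ⁻¹' {z : ℂ | 0 < z.re} := by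
      ext x
      simp only [hT, Set.mem_preimage, Set.mem_singleton_iff, Set.mem_setOf_eq]
      constructor
      · intro h; rw [h]; norm_num
      · intro h
        rcases hφval x x.2 with h1 | h1
        · exact h1
        · rw [hψ] at h; simp only at h; rw [h1] at h; norm_num at h
    rw [this]
    exact (isOpen_lt continuous_const (Complex.continuous_re)).preimage hψcont
  have hTclosed : IsClosed T := IsClosed.preimage hψcont isClosed_singleton
  have hT0 : (⟨0, by simp [hB]⟩ : B) ∈ T := by
    simp only [hT, Set.mem_preimage, Set.mem_singleton_iff, hψ, hφ]
    have : gsum (1/2) 0 = 1 := by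
      unfold gsum
      rw [tsum_eq_single 0]
      · simpa using genBinom_zero (1/2)
      · intro k hk
        cases k with
        | zero => exact absurd rfl hk
        | succ k => simp
    rw [this]
    norm_num
  have : T = Set.univ := (isClopen_iff.1 ⟨hTclosed, hTopen⟩).resolve_left (by
    intro h; rw [h] at hT0; exact hT0)
  have hmem : (⟨u, hBu⟩ : B) ∈ T := this ▸ Set.mem_univ _
  have h2 : φ u = 1 := hmem
  rw [hφ] at h2
  exact (div_eq_one_iff_eq (cpow_half_ne_zero hu)).1 h2


lemma gsum_add_one (a : ℂ) {u : ℂ} (hu : ‖u‖ < 1) :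
    HasSum (fun k : ℕ => genBinom (a + 1) k * u ^ k) ((1 + u) * gsum a u) := by
  have h1 := hasSum_gsum a hu
  have h2 : HasSum (fun k : ℕ => u * (genBinom a k * u ^ k)) (u * gsum a u) := h1.mul_left u
  have hs : HasSum (fun k : ℕ => genBinom a (k+1) * u ^ (k+1)) (gsum a u - 1) := by
    apply (hasSum_nat_add_iff (f := fun k : ℕ => genBinom a k * u ^ k) 1).2
    have : gsum a u - 1 + ∑ i ∈ range 1, genBinom a i * u ^ i = gsum a u := by
      rw [Finset.sum_range_one, genBinom_zero]
      ring
    rw [this]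
    exact h1
  have hfun : (fun k : ℕ => genBinom (a+1) (k+1) * u ^ (k+1))
      = fun k : ℕ => genBinom a (k+1) * u ^ (k+1) + u * (genBinom a k * u ^ k) := by
    funext k
    rw [genBinom_pascal]
    ring
  have hsum : HasSum (fun k : ℕ => genBinom (a + 1) (k+1) * u ^ (k+1))
      ((gsum a u - 1) + u * gsum a u) := by
    rw [hfun]
    exact hs.add h2
  have := (hasSum_nat_add_iff (f := fun k : ℕ => genBinom (a+1) k * u ^ k) 1).1 hsum
  have hval : gsum a u - 1 + u * gsum a u + ∑ i ∈ range 1, genBinom (a+1) i * u ^ i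
      = (1 + u) * gsum a u := by
    rw [Finset.sum_range_one, genBinom_zero]
    ring
  rwa [hval] at this

lemma hasSum_binom_half (j : ℕ) {u : ℂ} (hu : ‖u‖ < 1) :
    HasSum (fun k : ℕ => genBinom ((1:ℂ)/2 + j) k * u ^ k)
      ((1 + u) ^ j * ((1 + u) ^ ((1:ℂ)/2))) := by
  induction j with
  | zero =>
    have h := hasSum_gsum ((1:ℂ)/2) hu
    rw [gsum_half_eq_cpow hu] at h
    simpa using h
  | succ j ih =>
    have hcast : (1:ℂ)/2 + ((j+1 : ℕ) : ℂ) = ((1:ℂ)/2 + j) + 1 := by push_cast; ring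
    rw [hcast]
    have h1 := gsum_add_one ((1:ℂ)/2 + j) hu
    have hg : gsum ((1:ℂ)/2 + j) u = (1 + u) ^ j * ((1 + u) ^ ((1:ℂ)/2)) :=
      (hasSum_gsum _ hu).unique ih
    rw [hg] at h1
    have : (1 + u) * ((1 + u) ^ j * (1 + u) ^ ((1:ℂ)/2)) = (1+u)^(j+1) * (1+u)^((1:ℂ)/2) := by
      rw [pow_succ]
      ring
    rwa [this] at h1

lemma coeff_identity (n i : ℕ) (hi : i ≤ n) :
    ∑ j ∈ range (n+1), (if i ≤ j then
        (-1:ℂ)^(n-j) * genBinom ((2*(n:ℂ)+1)/2) (n-j) * genBinom ((2*(j:ℂ)+1)/2) (j-i)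
      else 0)
    = if i = n then 1 else 0 := by
  set A : ℂ := (2*(n:ℂ)+1)/2 with hA
  set r : ℕ := n - i with hr
  set F : ℕ → ℂ := fun j => (if i ≤ j then
        (-1:ℂ)^(n-j) * genBinom A (n-j) * genBinom ((2*(j:ℂ)+1)/2) (j-i)
      else 0) with hF
  have hrefl := Finset.sum_range_reflect F (n+1)
  simp only [Nat.add_sub_cancel] at hrefl
  rw [show (∑ j ∈ range (n+1), F j) = ∑ s ∈ range (n+1), F (n - s) from hrefl.symm]
  have hterm : ∀ s ∈ range (n+1),
      F (n - s) = (if s ≤ r then (-1:ℂ)^s * (genBinom A r * ((r.choose s : ℕ) : ℂ)) else 0) := by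
    intro s hs
    have hsn : s ≤ n := Nat.lt_succ_iff.1 (mem_range.1 hs)
    have h1 : n - (n - s) = s := by omega
    rw [hF]
    simp only
    by_cases hc : s ≤ r
    · have hc' : i ≤ n - s := by omega
      rw [if_pos hc', if_pos hc, h1]
      have hb : (2*((n-s : ℕ):ℂ)+1)/2 = A - s := by
        rw [hA]
        push_cast [Nat.cast_sub hsn]
        ring
      rw [hb]
      have ht : (n - s) - i = r - s := by omega
      rw [ht]
      have hgm := genBinom_mul A s (r - s)
      have hst : s + (r - s) = r := by omega
      rw [hst] at hgm
      rw [mul_assoc, hgm]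
    · rw [if_neg (by omega), if_neg hc]
  rw [Finset.sum_congr rfl hterm]
  have hsub : ∑ s ∈ range (n+1), (if s ≤ r then (-1:ℂ)^s * (genBinom A r * ((r.choose s : ℕ) : ℂ)) else 0)
      = ∑ s ∈ range (r+1), (-1:ℂ)^s * (genBinom A r * ((r.choose s : ℕ) : ℂ)) := by
    rw [← Finset.sum_subset (Finset.range_subset_range.2 (by omega : r + 1 ≤ n + 1))
      (fun s hs hns => by
        rw [if_neg]
        simp only [mem_range] at hs hns
        omega)]
    apply Finset.sum_congr rfl
    intro s hs
    rw [if_pos (Nat.lt_succ_iff.1 (mem_range.1 hs))]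
  rw [hsub]
  have hfac : ∑ s ∈ range (r+1), (-1:ℂ)^s * (genBinom A r * ((r.choose s : ℕ) : ℂ))
      = genBinom A r * ∑ s ∈ range (r+1), (-1:ℂ)^s * ((r.choose s : ℕ) : ℂ) := by
    rw [Finset.mul_sum]
    apply Finset.sum_congr rfl
    intro s _
    ring
  rw [hfac, alt_sum_choose]
  have hir : (i = n) ↔ (r = 0) := by omega
  by_cases h : i = n
  · rw [if_pos h, if_pos (hir.1 h), mul_one, hir.1 h, genBinom_zero]
  · rw [if_neg h, if_neg (fun hc => h (hir.2 hc)), mul_zero]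

/-- Grunsky coefficients of the Cassini oval: with `Ψ(z) = z(1 + z⁻²)^{1/2}` and the
Faber polynomial `F(w) = Σ_{j=0}^{n} (-1)^{n-j} binom((2n+1)/2, n-j) w^{2j+1}`, for
every `|z| > 1` one has
`z^{2n+1} = F(Ψ(z)) - Σ_{k≥0} c_{2n+1,2k+1} z^{-(2k+1)}` with
`c_{2n+1,2k+1} = Σ_{j=0}^{n} (-1)^{n-j} binom((2n+1)/2, n-j) binom((2j+1)/2, k+j+1)`. -/
theorem cassini_grunsky_coefficients (n : ℕ) :
    ∀ z : ℂ, 1 < ‖z‖ →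
      HasSum
        (fun k : ℕ =>
          (∑ j ∈ Finset.range (n + 1),
            (-1 : ℂ) ^ (n - j) * genBinom ((2 * (n : ℂ) + 1) / 2) (n - j) *
              genBinom ((2 * (j : ℂ) + 1) / 2) (k + j + 1)) / z ^ (2 * k + 1))
        ((∑ j ∈ Finset.range (n + 1),
            (-1 : ℂ) ^ (n - j) * genBinom ((2 * (n : ℂ) + 1) / 2) (n - j) *
              (z * ((1 + (z ^ 2)⁻¹) ^ ((1 : ℂ) / 2))) ^ (2 * j + 1)) -
          z ^ (2 * n + 1)) := by
  intro z hz
  have hz0 : z ≠ 0 := by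
    intro h
    rw [h, norm_zero] at hz
    linarith
  set u : ℂ := (z ^ 2)⁻¹ with hu_def
  have hu : ‖u‖ < 1 := by
    rw [hu_def, norm_inv, norm_pow]
    rw [inv_lt_one_iff₀]
    right
    nlinarith
  have hzpow : ∀ m : ℕ, z ^ m ≠ 0 := fun m => pow_ne_zero m hz0
  set A : ℕ → ℂ := fun j => (-1 : ℂ) ^ (n - j) * genBinom ((2 * (n : ℂ) + 1) / 2) (n - j) with hA
  set b : ℕ → ℂ := fun j => (2 * (j : ℂ) + 1) / 2 with hb
  set s : ℂ := (1 + u) ^ ((1:ℂ)/2) with hs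
  -- per-j series
  have hΨpow : ∀ j : ℕ, (z * s) ^ (2 * j + 1) = z ^ (2 * j + 1) * ((1 + u) ^ j * s) := by
    intro j
    rw [mul_pow]
    congr 1
    rw [pow_succ, pow_mul, cpow_half_sq hu]
  have hhalf : ∀ j : ℕ, b j = (1:ℂ)/2 + j := by
    intro j
    rw [hb]
    push_cast
    ring
  have hj : ∀ j : ℕ, HasSum (fun m : ℕ => A j * z ^ (2*j+1) * (genBinom (b j) m * u ^ m))
      (A j * (z * s) ^ (2*j+1)) := by
    intro j
    have h := (hasSum_binom_half j hu).mul_left (A j * z ^ (2*j+1))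
    rw [← hhalf j] at h
    rw [hΨpow j]
    convert h using 1
    · rfl
    · rw [hs]
      ring
  -- shifted series
  have hshift : ∀ j : ℕ, HasSum (fun k : ℕ => A j * z ^ (2*j+1) * (genBinom (b j) (k+(j+1)) * u ^ (k+(j+1))))
      (A j * (z * s) ^ (2*j+1)
        - ∑ m ∈ range (j+1), A j * z ^ (2*j+1) * (genBinom (b j) m * u ^ m)) := by
    intro j
    apply (hasSum_nat_add_iff (f := fun m : ℕ => A j * z ^ (2*j+1) * (genBinom (b j) m * u ^ m)) (j+1)).2
    rw [sub_add_cancel]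
    exact hj j
  -- sum over j
  have hsum := hasSum_sum (f := fun (j : ℕ) (k : ℕ) =>
      A j * z ^ (2*j+1) * (genBinom (b j) (k+(j+1)) * u ^ (k+(j+1))))
    (fun j _ => hshift j) (s := range (n+1))
  -- identify the function
  have hfun : ∀ k : ℕ, ∑ j ∈ range (n+1), A j * z ^ (2*j+1) * (genBinom (b j) (k+(j+1)) * u ^ (k+(j+1)))
      = (∑ j ∈ range (n+1), A j * genBinom (b j) (k+j+1)) / z ^ (2*k+1) := by
    intro k
    rw [Finset.sum_div]
    apply Finset.sum_congr rfl
    intro j _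
    have hkey : z ^ (2*j+1) * u ^ (k+(j+1)) = (z ^ (2*k+1))⁻¹ := by
      rw [hu_def, inv_pow, ← pow_mul]
      field_simp
      rw [← pow_add]
      congr 1
      ring
    rw [div_eq_mul_inv, ← hkey]
    ring
  -- identify the partial-sum polynomial
  have hpoly : ∑ j ∈ range (n+1), ∑ m ∈ range (j+1), A j * z ^ (2*j+1) * (genBinom (b j) m * u ^ m)
      = z ^ (2*n+1) := by
    have hstepA : ∀ j ∈ range (n+1),
        ∑ m ∈ range (j+1), A j * z ^ (2*j+1) * (genBinom (b j) m * u ^ m)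
        = ∑ i ∈ range (n+1), (if i ≤ j then A j * genBinom (b j) (j-i) else 0) * z ^ (2*i+1) := by
      intro j hjm
      have hjn : j ≤ n := Nat.lt_succ_iff.1 (mem_range.1 hjm)
      have h1 : ∀ m ∈ range (j+1), A j * z ^ (2*j+1) * (genBinom (b j) m * u ^ m)
          = A j * genBinom (b j) m * z ^ (2*(j-m)+1) := by
        intro m hm
        have hmj : m ≤ j := Nat.lt_succ_iff.1 (mem_range.1 hm)
        have hzu : z ^ (2*j+1) * u ^ m = z ^ (2*(j-m)+1) := by
          rw [hu_def, inv_pow, ← pow_mul]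
          rw [mul_inv_eq_iff_eq_mul₀ (hzpow _), ← pow_add]
          congr 1
          omega
        calc A j * z ^ (2*j+1) * (genBinom (b j) m * u ^ m)
            = A j * genBinom (b j) m * (z ^ (2*j+1) * u ^ m) := by ring
          _ = A j * genBinom (b j) m * z ^ (2*(j-m)+1) := by rw [hzu]
      rw [Finset.sum_congr rfl h1]
      have hrefl := Finset.sum_range_reflect
        (fun m => A j * genBinom (b j) m * z ^ (2*(j-m)+1)) (j+1)
      simp only [Nat.add_sub_cancel] at hrefl
      rw [← hrefl]
      have h2 : ∀ i ∈ range (j+1),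
          A j * genBinom (b j) (j-i) * z ^ (2*(j-(j-i))+1)
          = (if i ≤ j then A j * genBinom (b j) (j-i) else 0) * z ^ (2*i+1) := by
        intro i hi
        have hij : i ≤ j := Nat.lt_succ_iff.1 (mem_range.1 hi)
        rw [if_pos hij]
        congr 2
        omega
      rw [Finset.sum_congr rfl h2]
      apply Finset.sum_subset (Finset.range_subset_range.2 (by omega : j + 1 ≤ n + 1))
      intro i hi hni
      simp only [mem_range] at hi hni
      rw [if_neg (by omega), zero_mul]
    rw [Finset.sum_congr rfl hstepA, Finset.sum_comm]
    have h3 : ∀ i ∈ range (n+1),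
        ∑ j ∈ range (n+1), (if i ≤ j then A j * genBinom (b j) (j-i) else 0) * z ^ (2*i+1)
        = (if i = n then 1 else 0) * z ^ (2*i+1) := by
      intro i hi
      have hin : i ≤ n := Nat.lt_succ_iff.1 (mem_range.1 hi)
      rw [← Finset.sum_mul]
      congr 1
      rw [← coeff_identity n i hin]
    rw [Finset.sum_congr rfl h3]
    simp only [ite_mul, one_mul, zero_mul]
    rw [Finset.sum_ite_eq' (range (n+1)) n (fun i => z ^ (2*i+1))]
    rw [if_pos (self_mem_range_succ n)]
  -- final assembly
  rw [Finset.sum_sub_distrib, hpoly] at hsum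
  beta_reduce at hsum
  have hfn : (fun k : ℕ => ∑ j ∈ range (n+1), A j * z ^ (2*j+1) * (genBinom (b j) (k+(j+1)) * u ^ (k+(j+1))))
      = fun k : ℕ => (∑ j ∈ range (n+1), A j * genBinom (b j) (k+j+1)) / z ^ (2*k+1) :=
    funext hfun
  rw [hfn] at hsum
  exact hsum
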